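/- Let V be a finite nonempty set of n vertices and let S : V → V → ℝ be a symmetric, nonnegative separation function with S v v = 0 for all v. Suppose S satisfies the triangle inequality: S x z ≤ S x y + S y z for all x, y, z ∈ V. Then the minimum Hamiltonian path cost equals the minimum range over all valid assignments; precisely: (i) there exists a valid assignment C : V → ℝ whose range equals H(S), and (ii) every valid assignment C satisfies R(C) ≥ H(S). -/

import Mathlib

open Finset

variable {V : Type*}

/-- Cost of the Hamiltonian path ordering `h : Fin n ≃ V`:
`Σ_{k=0}^{n-2} S (h k) (h (k+1))`. -/
noncomputable def hamCost (n : ℕ) (S : V → V → ℝ) (h : Fin n ≃ V) : ℝ :=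
  ∑ k : Fin (n - 1),
    S (h ⟨(k : ℕ), by have := k.isLt; omega⟩) (h ⟨(k : ℕ) + 1, by have := k.isLt; omega⟩)

/-- `H(S)`: the minimum Hamiltonian path cost over all bijections `Fin n ≃ V`. -/
noncomputable def hamMin (V : Type*) (n : ℕ) (S : V → V → ℝ) : ℝ :=
  sInf (Set.range fun h : Fin n ≃ V => hamCost n S h)

/-- An assignment is valid if `|C x − C y| ≥ S x y` for all distinct `x, y`. -/
def IsValidAssignment (S : V → V → ℝ) (C : V → ℝ) : Prop :=
  ∀ x y : V, x ≠ y → S x y ≤ |C x - C y|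

/-- Range of an assignment: max value minus min value. -/
noncomputable def rangeOf [Fintype V] [Nonempty V] (C : V → ℝ) : ℝ :=
  univ.sup' univ_nonempty C - univ.inf' univ_nonempty C

lemma hamCost_eq_sum_range (n : ℕ) (S : V → V → ℝ) (h : Fin n ≃ V) :
    hamCost n S h = ∑ j ∈ Finset.range (n-1),
      (if hj : j + 1 < n then S (h ⟨j, by omega⟩) (h ⟨j+1, hj⟩) else 0) := by
  rw [hamCost, ← Fin.sum_univ_eq_sum_range]
  refine Finset.sum_congr rfl fun k _ => ?_
  have hk : (k:ℕ) + 1 < n := by have := k.isLt; omega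
  rw [dif_pos hk]

theorem hamiltonian_path_cost_eq_min_range
    [Fintype V] [Nonempty V] (n : ℕ) (hn : 0 < n) (hcard : Fintype.card V = n)
    (S : V → V → ℝ)
    (hsymm : ∀ x y : V, S x y = S y x)
    (hnonneg : ∀ x y : V, 0 ≤ S x y)
    (hdiag : ∀ v : V, S v v = 0)
    (htri : ∀ x y z : V, S x z ≤ S x y + S y z) :
    (∃ C : V → ℝ, IsValidAssignment S C ∧ rangeOf C = hamMin V n S) ∧
    (∀ C : V → ℝ, IsValidAssignment S C → hamMin V n S ≤ rangeOf C) := by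
  classical
  have hne : Nonempty (Fin n ≃ V) := ⟨(Fintype.equivFinOfCardEq hcard).symm⟩
  have hfin : (Set.range fun h : Fin n ≃ V => hamCost n S h).Finite := Set.finite_range _
  have hnes : (Set.range fun h : Fin n ≃ V => hamCost n S h).Nonempty := Set.range_nonempty _
  obtain ⟨h0, hh0⟩ := hnes.csInf_mem hfin
  have hmin : hamCost n S h0 = hamMin V n S := hh0
  set D : ℕ → ℝ := fun j => if hj : j + 1 < n then S (h0 ⟨j, by omega⟩) (h0 ⟨j+1, hj⟩) else 0
    with hD
  have hDnn : ∀ j, 0 ≤ D j := by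
    intro j; rw [hD]; dsimp only; split
    · exact hnonneg _ _
    · exact le_refl 0
  set P : ℕ → ℝ := fun k => ∑ j ∈ Finset.range k, D j with hP
  have hPmono : Monotone P := by
    intro a b hab
    exact Finset.sum_le_sum_of_subset_of_nonneg (Finset.range_mono hab)
      (fun j _ _ => hDnn j)
  have key : ∀ d : ℕ, ∀ i j : Fin n, (j:ℕ) = (i:ℕ) + d →
      S (h0 i) (h0 j) ≤ P j - P i := by
    intro d
    induction d with
    | zero =>
      intro i j hij
      have : i = j := Fin.ext (by omega)
      subst this
      simp [hdiag]
    | succ d ih =>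
      intro i j hij
      have hjlt : (i:ℕ) + d < n := by have := j.isLt; omega
      set m : Fin n := ⟨(i:ℕ) + d, hjlt⟩ with hm
      have h2 := ih i m rfl
      have htri' := htri (h0 i) (h0 m) (h0 j)
      have hsn : (i:ℕ) + d + 1 < n := by have := j.isLt; omega
      have hDval : D ((i:ℕ)+d) = S (h0 m) (h0 j) := by
        rw [hD]; dsimp only
        rw [dif_pos hsn]
        have e1 : (⟨(i:ℕ)+d, by omega⟩ : Fin n) = m := Fin.ext rfl
        have e2 : (⟨(i:ℕ)+d+1, hsn⟩ : Fin n) = j := Fin.ext (show (i:ℕ)+d+1 = (j:ℕ) by omega)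
        rw [e1, e2]
      have hPs : P ((i:ℕ)+d+1) = P ((i:ℕ)+d) + D ((i:ℕ)+d) := Finset.sum_range_succ _ _
      have hjv : (j:ℕ) = (i:ℕ)+d+1 := by omega
      have hmv : (m:ℕ) = (i:ℕ)+d := rfl
      rw [hjv]
      rw [hmv] at h2
      linarith
  -- the optimal assignment
  set C0 : V → ℝ := fun v => P ((h0.symm v : Fin n) : ℕ) with hC0
  have hvalid : IsValidAssignment S C0 := by
    intro x y hxy
    have hxy' : h0.symm x ≠ h0.symm y := fun h => hxy (by
      have := congrArg h0 h; simpa using this)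
    have main : ∀ a b : Fin n, (a:ℕ) < (b:ℕ) → S (h0 a) (h0 b) ≤ P b - P a := by
      intro a b hab
      exact key ((b:ℕ) - (a:ℕ)) a b (by omega)
    rcases lt_trichotomy ((h0.symm x : Fin n) : ℕ) ((h0.symm y : Fin n) : ℕ) with hlt | heq | hgt
    · have := main _ _ hlt
      rw [Equiv.apply_symm_apply, Equiv.apply_symm_apply] at this
      rw [hC0]; dsimp only
      rw [abs_sub_comm, abs_of_nonneg (by linarith [hPmono hlt.le])]
      linarith
    · exact absurd (Fin.ext heq) hxy'
    · have := main _ _ hgt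
      rw [Equiv.apply_symm_apply, Equiv.apply_symm_apply] at this
      rw [hC0]; dsimp only
      rw [abs_of_nonneg (by linarith [hPmono hgt.le])]
      rw [hsymm]
      linarith
  have hP0 : P 0 = 0 := by simp [hP]
  have hsup : univ.sup' univ_nonempty C0 = P (n-1) := by
    apply le_antisymm
    · apply Finset.sup'_le
      intro v _
      exact hPmono (by have := (h0.symm v).isLt; omega)
    · have hmem : h0 ⟨n-1, by omega⟩ ∈ (univ : Finset V) := Finset.mem_univ _
      have := Finset.le_sup' C0 hmem
      refine le_trans (le_of_eq ?_) this
      simp [hC0]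
  have hinf : univ.inf' univ_nonempty C0 = 0 := by
    apply le_antisymm
    · have hmem : h0 ⟨0, hn⟩ ∈ (univ : Finset V) := Finset.mem_univ _
      have := Finset.inf'_le C0 hmem
      refine le_trans this (le_of_eq ?_)
      simp [hC0, hP0]
    · apply Finset.le_inf'
      intro v _
      have : P 0 ≤ P ((h0.symm v : Fin n) : ℕ) := hPmono (Nat.zero_le _)
      rw [hP0] at this
      exact this
  have hrange : rangeOf C0 = hamMin V n S := by
    rw [rangeOf, hsup, hinf, sub_zero, ← hmin, hamCost_eq_sum_range]
  refine ⟨⟨C0, hvalid, hrange⟩, ?_⟩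
  -- lower bound part
  intro C hC
  obtain ⟨e⟩ := hne
  set f : Fin n → ℝ := C ∘ e with hf
  set h : Fin n ≃ V := (Tuple.sort f).trans e with hh
  have hm : Monotone (fun k : Fin n => C (h k)) := Tuple.monotone_sort f
  have hle : hamMin V n S ≤ hamCost n S h := csInf_le hfin.bddBelow ⟨h, rfl⟩
  refine le_trans hle ?_
  set G : ℕ → ℝ := fun k => if hk : k < n then C (h ⟨k, hk⟩) else 0 with hG
  have step : hamCost n S h ≤ ∑ j ∈ Finset.range (n-1), (G (j+1) - G j) := by
    rw [hamCost_eq_sum_range]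
    apply Finset.sum_le_sum
    intro j hj
    have hj1 : j + 1 < n := by
      have := Finset.mem_range.1 hj; omega
    rw [dif_pos hj1]
    have hjn : j < n := by omega
    have hGa : G j = C (h ⟨j, hjn⟩) := by rw [hG]; dsimp only; rw [dif_pos hjn]
    have hGb : G (j+1) = C (h ⟨j+1, hj1⟩) := by rw [hG]; dsimp only; rw [dif_pos hj1]
    have hne' : h ⟨j, by omega⟩ ≠ h ⟨j+1, hj1⟩ := by
      intro heq
      have := h.injective heq
      simp [Fin.ext_iff] at this
    have hmono' : C (h ⟨j, hjn⟩) ≤ C (h ⟨j+1, hj1⟩) := hm (by simp [Fin.le_def])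
    have := hC _ _ hne'
    rw [abs_sub_comm, abs_of_nonneg (by linarith)] at this
    rw [hGa, hGb]
    linarith
  refine le_trans step ?_
  rw [Finset.sum_range_sub G (n-1)]
  have h1 : G (n-1) ≤ univ.sup' univ_nonempty C := by
    rw [hG]; dsimp only
    rw [dif_pos (show n - 1 < n by omega)]
    exact Finset.le_sup' C (Finset.mem_univ _)
  have h2 : univ.inf' univ_nonempty C ≤ G 0 := by
    rw [hG]; dsimp only
    rw [dif_pos hn]
    exact Finset.inf'_le C (Finset.mem_univ _)
  rw [rangeOf]
  linarith
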